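/- arXiv:2301.08206 — 3 statements merged into one kernel-verified Lean document; each statement's English description precedes it below -/
import Mathlib

section
/- Let $\nu$ be a lattice path, and suppose $1 \leq k \leq n$, $f_{k-1} < i < f_k$, and $h_i(\nu)+1 \leq m \leq n$. In the lattice of $\nu$-bracket vectors under componentwise order, $\kappa(\mathfrak{b}^{i,m}) = \mathfrak{c}^{i,m}$; that is, $\mathfrak{b}^{i,m} \wedge \mathfrak{c}^{i,m}$ is covered by $\mathfrak{b}^{i,m}$ and $\mathfrak{b}^{i,m} \vee \mathfrak{c}^{i,m}$ covers $\mathfrak{c}^{i,m}$. -/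
/-- `b` is a `ν`-bracket vector. -/
def IsBracketVec (ℓ n : ℕ) (h : Fin (ℓ + 1) → ℕ) (f : Fin (n + 1) → Fin (ℓ + 1))
    (b : Fin (ℓ + 1) → ℕ) : Prop :=
  (∀ k : Fin (n + 1), b (f k) = (k : ℕ)) ∧
  (∀ i : Fin (ℓ + 1), h i ≤ b i ∧ b i ≤ n) ∧
  ∀ i1 i2 i3 : Fin (ℓ + 1), i1 < i2 → i2 < i3 → b i1 = b i3 → ¬ b i1 < b i2

private lemma hmono_aux (ℓ : ℕ) (h : Fin (ℓ + 1) → ℕ)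
    (hstep : ∀ i : Fin ℓ, h i.succ = h i.castSucc ∨ h i.succ = h i.castSucc + 1) :
    ∀ p q : Fin (ℓ + 1), p ≤ q → h p ≤ h q := by
  have key : ∀ d : ℕ, ∀ p : ℕ, ∀ hp : p < ℓ + 1, ∀ hq : p + d < ℓ + 1,
      h ⟨p, hp⟩ ≤ h ⟨p + d, hq⟩ := by
    intro d
    induction d with
    | zero => intro p hp hq; simp
    | succ d ih =>
      intro p hp hq
      have h1 := ih p hp (by omega)
      have h2 := hstep ⟨p + d, by omega⟩
      have e1 : (⟨p + d, by omega⟩ : Fin ℓ).succ = ⟨p + d + 1, by omega⟩ := rfl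
      have e2 : (⟨p + d, by omega⟩ : Fin ℓ).castSucc = ⟨p + d, by omega⟩ := rfl
      rw [e1, e2] at h2
      have e3 : p + (d + 1) = p + d + 1 := by omega
      simp only [e3]
      omega
  intro p q hpq
  have hv : (p : ℕ) ≤ q := hpq
  have hk := key ((q : ℕ) - p) p p.isLt (by omega)
  have e : (⟨(p : ℕ) + ((q : ℕ) - p), by omega⟩ : Fin (ℓ + 1)) = q := by
    apply Fin.ext; simp; omega
  rw [e] at hk
  simpa using hk

/-- In the lattice of `ν`-bracket vectors under componentwise order,
`κ(𝔟^{i,m}) = 𝔠^{i,m}`: both are bracket vectors, the meet `𝔟^{i,m} ∧ 𝔠^{i,m}`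
(the componentwise minimum) is covered by `𝔟^{i,m}`, and the join
`𝔟^{i,m} ∨ 𝔠^{i,m}` covers `𝔠^{i,m}`. Here `𝔟^{i,m}` is `m` on positions
`f_{k-1}+1, …, i` and `h` elsewhere, while `𝔠^{i,m}` is `s` at `r = f_s`, is `m-1` at
non-`f` indices `r` with `i ≤ r < f_{m-1}` (equivalently `i ≤ r` and `h r < m`), and
is `n` otherwise. -/
theorem stmt_17 (ℓ n : ℕ) (h : Fin (ℓ + 1) → ℕ) (f : Fin (n + 1) → Fin (ℓ + 1))
    (h0 : h 0 = 0) (hlast : h (Fin.last ℓ) = n)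
    (hstep : ∀ i : Fin ℓ, h i.succ = h i.castSucc ∨ h i.succ = h i.castSucc + 1)
    (hf : ∀ k : Fin (n + 1), h (f k) = (k : ℕ) ∧ ∀ i : Fin (ℓ + 1), h i = (k : ℕ) → i ≤ f k)
    (k : ℕ) (hk1 : 1 ≤ k) (hk2 : k ≤ n)
    (i : Fin (ℓ + 1))
    (hi1 : f ⟨k - 1, by omega⟩ < i) (hi2 : i < f ⟨k, by omega⟩)
    (m : ℕ) (hm1 : h i + 1 ≤ m) (hm2 : m ≤ n)
    (B C : Fin (ℓ + 1) → ℕ)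
    (hB : B = fun r => if f ⟨k - 1, by omega⟩ < r ∧ r ≤ i then m else h r)
    (hC : C = fun r => if ∃ s : Fin (n + 1), r = f s then h r
      else if i ≤ r ∧ h r < m then m - 1 else n) :
    IsBracketVec ℓ n h f B ∧ IsBracketVec ℓ n h f C ∧
      (∀ bB bM : {v : Fin (ℓ + 1) → ℕ // IsBracketVec ℓ n h f v},
        bB.1 = B → bM.1 = (fun r => min (B r) (C r)) → bM ⋖ bB) ∧
      (∀ bB bC j : {v : Fin (ℓ + 1) → ℕ // IsBracketVec ℓ n h f v},
        bB.1 = B → bC.1 = C → IsLUB {bB, bC} j → bC ⋖ j) := by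
  have pk1 : k - 1 < n + 1 := by omega
  have pk : k < n + 1 := by omega
  have pm : m - 1 < n + 1 := by omega
  have hi1' : f ⟨k - 1, pk1⟩ < i := hi1
  have hi2' : i < f ⟨k, pk⟩ := hi2
  -- value lemmas
  have hBv : ∀ r, B r = if f ⟨k - 1, pk1⟩ < r ∧ r ≤ i then m else h r := by
    intro r; rw [hB]
  have hCv : ∀ r, C r = if ∃ s : Fin (n + 1), r = f s then h r
      else if i ≤ r ∧ h r < m then m - 1 else n := by
    intro r; rw [hC]
  clear hB hC hi1 hi2
  -- monotonicity of h
  have hmono : ∀ p q : Fin (ℓ + 1), p ≤ q → h p ≤ h q := hmono_aux ℓ h hstep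
  have hlen : ∀ r : Fin (ℓ + 1), h r ≤ n := fun r => hlast ▸ hmono r (Fin.last ℓ) (Fin.le_last r)
  have hgt : ∀ (s : Fin (n + 1)) (r : Fin (ℓ + 1)), f s < r → (s : ℕ) < h r := by
    intro s r hlt
    have h1 : (s : ℕ) ≤ h r := (hf s).1 ▸ hmono (f s) r hlt.le
    rcases eq_or_lt_of_le h1 with he | h2
    · exact absurd ((hf s).2 r he.symm) (not_le.mpr hlt)
    · exact h2
  have hle : ∀ (s : Fin (n + 1)) (r : Fin (ℓ + 1)), r ≤ f s → h r ≤ (s : ℕ) :=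
    fun s r hr => (hf s).1 ▸ hmono r (f s) hr
  have hseg : ∀ r : Fin (ℓ + 1), f ⟨k - 1, pk1⟩ < r → r ≤ i → h r = k := by
    intro r h1 h2
    have e1 := hgt ⟨k - 1, pk1⟩ r h1
    have e2 := hle ⟨k, pk⟩ r (le_of_lt (lt_of_le_of_lt h2 hi2'))
    have c1 : ((⟨k - 1, pk1⟩ : Fin (n + 1)) : ℕ) = k - 1 := rfl
    have c2 : ((⟨k, pk⟩ : Fin (n + 1)) : ℕ) = k := rfl
    rw [c1] at e1; rw [c2] at e2; omega
  have hik : h i = k := hseg i hi1' le_rfl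
  have hkm : k + 1 ≤ m := by omega
  have hnotf : ∀ r : Fin (ℓ + 1), f ⟨k - 1, pk1⟩ < r → r < f ⟨k, pk⟩ →
      ¬ ∃ s, r = f s := by
    rintro r h1 h2 ⟨s, rfl⟩
    have e1 := hgt ⟨k - 1, pk1⟩ (f s) h1
    rw [(hf s).1] at e1
    have e2 := hle ⟨k, pk⟩ (f s) h2.le
    rw [(hf s).1] at e2
    have c1 : ((⟨k - 1, pk1⟩ : Fin (n + 1)) : ℕ) = k - 1 := rfl
    have c2 : ((⟨k, pk⟩ : Fin (n + 1)) : ℕ) = k := rfl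
    rw [c1] at e1; rw [c2] at e2
    have hs : s = ⟨k, pk⟩ := Fin.ext (by omega)
    rw [hs] at h2
    exact lt_irrefl _ h2
  have hTle : ∀ r : Fin (ℓ + 1), h r < m → r ≤ f ⟨m - 1, pm⟩ := by
    intro r hr
    by_contra hc
    push_neg at hc
    have e1 := hgt ⟨m - 1, pm⟩ r hc
    have c1 : ((⟨m - 1, pm⟩ : Fin (n + 1)) : ℕ) = m - 1 := rfl
    rw [c1] at e1; omega
  have hfm : h (f ⟨m - 1, pm⟩) = m - 1 := (hf ⟨m - 1, pm⟩).1
  have hinotf : ¬ ∃ s, i = f s := hnotf i hi1' hi2'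
  have hifm : i < f ⟨m - 1, pm⟩ := by
    have h1 : i ≤ f ⟨m - 1, pm⟩ := hTle i (by omega)
    rcases eq_or_lt_of_le h1 with he | h2
    · exact absurd ⟨⟨m - 1, pm⟩, he⟩ hinotf
    · exact h2
  -- C value facts
  have hChge : ∀ r, h r ≤ C r := by
    intro r; rw [hCv r]
    split_ifs with h1 h2
    · exact le_rfl
    · omega
    · exact hlen r
  have hClen : ∀ r, C r ≤ n := by
    intro r; rw [hCv r]
    split_ifs with h1 h2
    · exact hlen r
    · omega
    · exact le_rfl
  have hBi : B i = m := by rw [hBv i, if_pos ⟨hi1', le_rfl⟩]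
  have hCi : C i = m - 1 := by
    rw [hCv i, if_neg hinotf, if_pos ⟨le_rfl, by omega⟩]
  have hBC : ∀ r, r ≠ i → B r ≤ C r := by
    intro r hri
    rw [hBv r, hCv r]
    split_ifs with hs hf1 ht
    · exact absurd hf1 (hnotf r hs.1 (lt_of_le_of_lt hs.2 hi2'))
    · exact absurd (le_antisymm hs.2 ht.1) hri
    · exact hm2
    · exact le_rfl
    · omega
    · exact hlen r
  -- B is a bracket vector
  have hBbr : IsBracketVec ℓ n h f B := by
    refine ⟨?_, ?_, ?_⟩
    · intro s
      rw [hBv (f s), if_neg, (hf s).1]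
      rintro ⟨ha, hb⟩
      exact hnotf (f s) ha (lt_of_le_of_lt hb hi2') ⟨s, rfl⟩
    · intro r
      rw [hBv r]
      split_ifs with hs
      · rw [hseg r hs.1 hs.2]; omega
      · exact ⟨le_rfl, hlen r⟩
    · intro i1 i2 i3 h12 h23 heq hlt
      rw [hBv i1, hBv i2] at hlt
      rw [hBv i1, hBv i3] at heq
      by_cases s1 : f ⟨k - 1, pk1⟩ < i1 ∧ i1 ≤ i <;>
        by_cases s2 : f ⟨k - 1, pk1⟩ < i2 ∧ i2 ≤ i <;>
        by_cases s3 : f ⟨k - 1, pk1⟩ < i3 ∧ i3 ≤ i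
      · rw [if_pos s1, if_pos s2] at hlt; omega
      · rw [if_pos s1, if_pos s2] at hlt; omega
      · exact s2 ⟨lt_trans s1.1 h12, le_of_lt (lt_of_lt_of_le h23 s3.2)⟩
      · rw [if_pos s1, if_neg s2] at hlt
        rw [if_pos s1, if_neg s3] at heq
        have := hmono i2 i3 h23.le; omega
      · rw [if_neg s1, if_pos s3] at heq
        have hle1 : i1 ≤ f ⟨k - 1, pk1⟩ := by
          by_contra hc; push_neg at hc
          exact s1 ⟨hc, le_trans h12.le s2.2⟩
        have e1 := hle ⟨k - 1, pk1⟩ i1 hle1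
        have c1 : ((⟨k - 1, pk1⟩ : Fin (n + 1)) : ℕ) = k - 1 := rfl
        rw [c1] at e1; omega
      · rw [if_neg s1, if_neg s3] at heq
        rw [if_neg s1, if_pos s2] at hlt
        have hle1 : i1 ≤ f ⟨k - 1, pk1⟩ := by
          by_contra hc; push_neg at hc
          exact s1 ⟨hc, le_trans h12.le s2.2⟩
        have e1 := hle ⟨k - 1, pk1⟩ i1 hle1
        have e2 := hgt ⟨k - 1, pk1⟩ i3 (lt_trans s2.1 h23)
        have c1 : ((⟨k - 1, pk1⟩ : Fin (n + 1)) : ℕ) = k - 1 := rfl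
        rw [c1] at e1 e2; omega
      · rw [if_neg s1, if_pos s3] at heq
        have hle1 : i1 ≤ f ⟨k - 1, pk1⟩ := by
          by_contra hc; push_neg at hc
          exact s1 ⟨hc, le_trans (lt_trans h12 h23).le s3.2⟩
        have e1 := hle ⟨k - 1, pk1⟩ i1 hle1
        have c1 : ((⟨k - 1, pk1⟩ : Fin (n + 1)) : ℕ) = k - 1 := rfl
        rw [c1] at e1; omega
      · rw [if_neg s1, if_neg s3] at heq
        rw [if_neg s1, if_neg s2] at hlt
        have := hmono i2 i3 h23.le; omega
  -- C is a bracket vector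
  have hCub : ∀ r, i ≤ r → h r < m → C r ≤ m - 1 := by
    intro r hr1 hr2
    rw [hCv r]
    split_ifs with hh1 hh2
    · omega
    · exact le_rfl
    · exact absurd ⟨hr1, hr2⟩ hh2
  have hCbr : IsBracketVec ℓ n h f C := by
    refine ⟨?_, fun r => ⟨hChge r, hClen r⟩, ?_⟩
    · intro s
      rw [hCv (f s), if_pos ⟨s, rfl⟩, (hf s).1]
    · intro i1 i2 i3 h12 h23 heq hlt
      have hub2 := hClen i2
      by_cases hf1 : ∃ s, i1 = f s
      · obtain ⟨a, ha⟩ := hf1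
        have e1 : C i1 = (a : ℕ) := by rw [ha, hCv (f a), if_pos ⟨a, rfl⟩, (hf a).1]
        by_cases hf3 : ∃ s, i3 = f s
        · obtain ⟨b, hb⟩ := hf3
          have e3 : C i3 = (b : ℕ) := by rw [hb, hCv (f b), if_pos ⟨b, rfl⟩, (hf b).1]
          rw [e1, e3] at heq
          have hab : a = b := Fin.ext heq
          rw [ha, hab] at h12
          rw [hb] at h23
          exact absurd (lt_trans h12 h23) (lt_irrefl _)
        · rw [hCv i3, if_neg hf3] at heq
          split_ifs at heq with ht
          · rw [e1] at heq
            have hae : a = ⟨m - 1, pm⟩ := Fin.ext heq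
            have h31 : i3 ≤ i1 := by rw [ha, hae]; exact hTle i3 ht.2
            exact absurd (lt_trans h12 h23) (not_lt.mpr h31)
          · rw [e1] at heq
            rw [heq] at e1
            rw [e1] at hlt; omega
      · rw [hCv i1, if_neg hf1] at heq hlt
        split_ifs at heq hlt with ht
        · have hi2m : h i2 < m := by
            by_cases hf3 : ∃ s, i3 = f s
            · obtain ⟨b, hb⟩ := hf3
              have e3 : C i3 = (b : ℕ) := by rw [hb, hCv (f b), if_pos ⟨b, rfl⟩, (hf b).1]
              rw [e3] at heq
              have e4 : h i3 = m - 1 := by rw [hb, (hf b).1]; omega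
              have := hmono i2 i3 h23.le
              omega
            · rw [hCv i3, if_neg hf3] at heq
              split_ifs at heq with ht3
              · have := hmono i2 i3 h23.le; omega
              · omega
          have := hCub i2 (le_trans ht.1 h12.le) hi2m
          omega
        · omega
  refine ⟨hBbr, hCbr, ?_, ?_⟩
  · -- covering for the meet
    rintro bB bM hbB hbM
    have hMne : ∀ r, r ≠ i → min (B r) (C r) = B r := fun r hr => min_eq_left (hBC r hr)
    constructor
    · rw [← Subtype.coe_lt_coe, hbB, hbM]
      rw [Pi.lt_def]
      refine ⟨fun r => min_le_left _ _, ⟨i, ?_⟩⟩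
      show min (B i) (C i) < B i
      rw [hBi, hCi, min_eq_right (by omega : m - 1 ≤ m)]
      omega
    · intro c hc1 hc2
      have l1 : bM.1 < c.1 := by rw [← Subtype.coe_lt_coe] at hc1; exact hc1
      have l2 : c.1 < bB.1 := by rw [← Subtype.coe_lt_coe] at hc2; exact hc2
      rw [hbM] at l1; rw [hbB] at l2
      rw [Pi.lt_def] at l1 l2
      obtain ⟨l1a, r1, hr1⟩ := l1
      obtain ⟨l2a, r2, hr2⟩ := l2
      have hr1' : min (B r1) (C r1) < c.1 r1 := hr1
      have hceq : ∀ r, r ≠ i → c.1 r = B r := by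
        intro r hr
        have g1 : min (B r) (C r) ≤ c.1 r := l1a r
        have g2 : c.1 r ≤ B r := l2a r
        rw [min_eq_left (hBC r hr)] at g1
        omega
      have e1 : r1 = i := by
        by_contra hcn
        rw [min_eq_left (hBC r1 hcn), hceq r1 hcn] at hr1'
        exact lt_irrefl _ hr1'
      have e2 : r2 = i := by
        by_contra hcn
        rw [hceq r2 hcn] at hr2
        exact lt_irrefl _ hr2
      rw [e1] at hr1'; rw [e2] at hr2
      have emin : min (B i) (C i) = m - 1 := by
        rw [hBi, hCi]; exact min_eq_right (by omega)
      rw [emin] at hr1'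
      rw [hBi] at hr2
      omega
  · -- covering for the join
    rintro bB bC j hbB hbC hlub
    have hjB : bB ≤ j := hlub.1 (Set.mem_insert _ _)
    have hjC : bC ≤ j := hlub.1 (Set.mem_insert_of_mem _ rfl)
    constructor
    · refine lt_of_le_of_ne hjC (fun he => ?_)
      rw [← he] at hjB
      have h2 : bB.1 i ≤ bC.1 i := Subtype.coe_le_coe.mpr hjB i
      rw [hbB, hbC, hBi, hCi] at h2
      omega
    · intro c hc1 hc2
      by_cases hcB : bB ≤ c
      · have hub : c ∈ upperBounds {bB, bC} := by
          rintro x (rfl | rfl)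
          · exact hcB
          · exact hc1.le
        exact absurd (lt_of_lt_of_le hc2 (hlub.2 hub)) (lt_irrefl c)
      · have hCle : ∀ r, C r ≤ c.1 r := by
          intro r
          have g := Subtype.coe_le_coe.mpr hc1.le
          rw [hbC] at g
          exact g r
        have hex : ∃ r, c.1 r < B r := by
          rw [← Subtype.coe_le_coe, hbB, Pi.le_def] at hcB
          push_neg at hcB
          obtain ⟨r, hr⟩ := hcB
          exact ⟨r, hr⟩
        obtain ⟨r0, hr0⟩ := hex
        have hci : c.1 i < m := by
          by_cases hri : r0 = i
          · rw [hri, hBi] at hr0; exact hr0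
          · exact absurd hr0 (not_lt.mpr (le_trans (hBC r0 hri) (hCle r0)))
        have hcieq : c.1 i = m - 1 := by
          have := hCle i; rw [hCi] at this; omega
        have hceq : c.1 = bC.1 := by
          funext r
          rw [hbC, hCv r]
          split_ifs with hf1 ht
          · obtain ⟨s, rfl⟩ := hf1
            rw [c.2.1 s, (hf s).1]
          · rcases eq_or_lt_of_le ht.1 with he | hlt'
            · rw [← he, hcieq]
            · have hrf : r < f ⟨m - 1, pm⟩ :=
                lt_of_le_of_ne (hTle r ht.2) (fun he2 => hf1 ⟨⟨m - 1, pm⟩, he2⟩)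
              have hcf : c.1 (f ⟨m - 1, pm⟩) = m - 1 := c.2.1 ⟨m - 1, pm⟩
              have h3 := c.2.2.2 i r (f ⟨m - 1, pm⟩) hlt' hrf (by rw [hcieq, hcf])
              have h4 := hCle r
              rw [hCv r, if_neg hf1, if_pos ht] at h4
              rw [hcieq] at h3
              omega
          · have g1 := (c.2.2.1 r).2
            have g2 := hCle r
            rw [hCv r, if_neg hf1, if_neg ht] at g2
            omega
        have hcC : c = bC := Subtype.ext hceq
        rw [hcC] at hc1
        exact lt_irrefl _ hc1
end

section
/- Let $w \in S_n$ be a $312$-avoiding permutation. Then the set of descent bottoms $\mathrm{DB}(w) = \{w(i+1) : i \in \mathrm{Des}(w)\}$ and the set of left-to-right maxima $\mathrm{LRMax}(w) = \{w(i) : w(j) < w(i) \text{ for all } 1 \leq j \leq i-1\}$ form a partition of $[n]$, i.e., they are disjoint and their union is $[n]$. -/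
open Finset Equiv

/-- `x` is `312`-avoiding. -/
def Avoids312 {m : ℕ} (x : Equiv.Perm (Fin (m + 1))) : Prop :=
  ¬ ∃ i1 i2 i3 : Fin (m + 1), i1 < i2 ∧ i2 < i3 ∧ x i2 < x i3 ∧ x i3 < x i1

/-- The set of descent bottoms of a permutation: the values `w(i+1)` at descents `i`. -/
def descentBottoms {m : ℕ} (w : Equiv.Perm (Fin (m + 1))) : Finset (Fin (m + 1)) :=
  (Finset.univ.filter (fun i : Fin m => w i.succ < w i.castSucc)).image
    (fun i => w i.succ)

/-- The set of left-to-right maxima of a permutation: the values `w(i)` exceeding all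
earlier values. -/
def lrMaxima {m : ℕ} (w : Equiv.Perm (Fin (m + 1))) : Finset (Fin (m + 1)) :=
  (Finset.univ.filter (fun i : Fin (m + 1) => ∀ j : Fin (m + 1), j < i → w j < w i)).image w

/-- For a `312`-avoiding permutation `w ∈ S_n`, the descent bottoms
and the left-to-right maxima form a partition of `[n]`. -/
theorem stmt_18 {m : ℕ} (w : Equiv.Perm (Fin (m + 1))) (hw : Avoids312 w) :
    Disjoint (descentBottoms w) (lrMaxima w) ∧
      descentBottoms w ∪ lrMaxima w = Finset.univ := by
  constructor
  · rw [Finset.disjoint_left]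
    intro x hdb hlr
    simp only [descentBottoms, lrMaxima, Finset.mem_image, Finset.mem_filter,
      Finset.mem_univ, true_and] at hdb hlr
    obtain ⟨i, hi, hxi⟩ := hdb
    obtain ⟨k, hk, hxk⟩ := hlr
    have hki : k = i.succ := w.injective (hxk.trans hxi.symm)
    subst hki
    exact absurd (hk i.castSucc (Fin.castSucc_lt_succ : i.castSucc < i.succ)) (not_lt.2 hi.le)
  · ext x
    simp only [Finset.mem_union, Finset.mem_univ, iff_true]
    have hwi : w (w.symm x) = x := w.apply_symm_apply x
    set i := w.symm x with hix
    by_cases h : ∀ j, j < i → w j < w i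
    · right
      simp only [lrMaxima, Finset.mem_image, Finset.mem_filter, Finset.mem_univ, true_and]
      exact ⟨i, h, hwi⟩
    · left
      push_neg at h
      obtain ⟨j, hji, hwj⟩ := h
      have hwj' : w i < w j := lt_of_le_of_ne hwj (fun e => (ne_of_lt hji) (w.injective e.symm))
      have hne : i ≠ 0 := fun e => by simp [e] at hji
      set i' := i.pred hne with hi'
      have hsucc : i'.succ = i := Fin.succ_pred i hne
      have hcs : i'.castSucc < i := hsucc ▸ (Fin.castSucc_lt_succ : i'.castSucc < i'.succ)
      rcases lt_or_ge (w i) (w i'.castSucc) with hlt | hle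
      · simp only [descentBottoms, Finset.mem_image, Finset.mem_filter, Finset.mem_univ,
          true_and]
        refine ⟨i', ?_, ?_⟩
        · rw [hsucc]; exact hlt
        · rw [hsucc]; exact hwi
      · have hne2 : w i'.castSucc ≠ w i := fun e => (ne_of_lt hcs) (w.injective e)
        have hlt2 : w i'.castSucc < w i := lt_of_le_of_ne hle hne2
        have hjc : j < i'.castSucc := by
          rcases lt_or_ge j i'.castSucc with h1 | h1
          · exact h1
          · exfalso
            have : j = i'.castSucc := le_antisymm (by rw [← hsucc] at hji; exact Fin.le_castSucc_iff.mpr hji) h1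
            rw [this] at hwj'
            exact absurd (hlt2.trans hwj') (lt_irrefl _)
        exact absurd ⟨j, i'.castSucc, i, hjc, hcs, hlt2, hwj'⟩ hw
end

section
/- Let $w, w' \in S_n$ with $w' \leq w$ in the (right) weak order. Then every left-to-right maximum of $w$ is a left-to-right maximum of $w'$, i.e., $\mathrm{LRMax}(w) \subseteq \mathrm{LRMax}(w')$. Consequently, if both $w$ and $w'$ are $312$-avoiding, then $\mathrm{DB}(w') \subseteq \mathrm{DB}(w)$. -/
open Finset Equiv

/-- The inversion set of a permutation, as a set of pairs of values `(a, b)` with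
`a < b` appearing in the wrong order. -/
def invSet {m : ℕ} (w : Equiv.Perm (Fin (m + 1))) : Finset (Fin (m + 1) × Fin (m + 1)) :=
  Finset.univ.filter
    (fun q : Fin (m + 1) × Fin (m + 1) => q.1 < q.2 ∧ w⁻¹ q.2 < w⁻¹ q.1)

/-- The (right) weak order on `S_n`: containment of inversion sets of values. -/
def weakLe {m : ℕ} (u v : Equiv.Perm (Fin (m + 1))) : Prop := invSet u ⊆ invSet v

lemma perm_apply_inv_self' {n : ℕ} (f : Equiv.Perm (Fin n)) (x : Fin n) : f (f⁻¹ x) = x :=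
  (Equiv.eq_symm_apply f).mp rfl

lemma perm_inv_apply_self' {n : ℕ} (f : Equiv.Perm (Fin n)) (x : Fin n) : f⁻¹ (f x) = x :=
  Equiv.Perm.inv_eq_iff_eq.mpr rfl

lemma mem_lrMaxima_iff {m : ℕ} (w : Equiv.Perm (Fin (m + 1))) (a : Fin (m + 1)) :
    a ∈ lrMaxima w ↔ ∀ b, a < b → w⁻¹ a < w⁻¹ b := by
  simp only [lrMaxima, Finset.mem_image, Finset.mem_filter, Finset.mem_univ, true_and]
  constructor
  · rintro ⟨i, hi, rfl⟩ b hb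
    have h1 : w⁻¹ (w i) = i := (perm_inv_apply_self' w) i
    rw [h1]
    rcases lt_trichotomy (w⁻¹ b) i with h | h | h
    · have := hi _ h
      rw [(perm_apply_inv_self' w)] at this
      exact absurd hb (not_lt.mpr this.le)
    · rw [← h, (perm_apply_inv_self' w)] at hb; exact absurd hb (lt_irrefl _)
    · exact h
  · intro h
    refine ⟨w⁻¹ a, ?_, (perm_apply_inv_self' w) a⟩
    intro j hj
    rw [(perm_apply_inv_self' w)]
    rcases lt_trichotomy (w j) a with h1 | h1 | h1
    · exact h1
    · rw [← h1, (perm_inv_apply_self' w)] at hj; exact absurd hj (lt_irrefl _)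
    · have := h _ h1
      rw [(perm_inv_apply_self' w)] at this
      exact absurd hj (not_lt.mpr this.le)

/-- If `w' ≤ w` in the weak order on `S_n`, then every left-to-right
maximum of `w` is a left-to-right maximum of `w'`; consequently, if both `w` and `w'`
are `312`-avoiding, then `DB(w') ⊆ DB(w)`. -/
theorem stmt_19 {m : ℕ} (w w' : Equiv.Perm (Fin (m + 1))) (hle : weakLe w' w) :
    lrMaxima w ⊆ lrMaxima w' ∧
      (Avoids312 w → Avoids312 w' → descentBottoms w' ⊆ descentBottoms w) := by
  have key : lrMaxima w ⊆ lrMaxima w' := by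
    intro a ha
    rw [mem_lrMaxima_iff] at ha ⊢
    intro b hb
    by_contra hc
    push_neg at hc
    have hne : w'⁻¹ b ≠ w'⁻¹ a := fun h => absurd (w'⁻¹.injective h) hb.ne'
    have : (a, b) ∈ invSet w' := by
      simp only [invSet, Finset.mem_filter, Finset.mem_univ, true_and]
      exact ⟨hb, lt_of_le_of_ne hc hne⟩
    have := hle this
    simp only [invSet, Finset.mem_filter, Finset.mem_univ, true_and] at this
    exact absurd (ha b hb) (not_lt.mpr this.2.le)
  refine ⟨key, fun hw _ a ha => ?_⟩
  -- a is a descent bottom of w', hence not an LR max of w', hence not of w,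
  -- hence by 312-avoidance a descent bottom of w.
  simp only [descentBottoms, Finset.mem_image, Finset.mem_filter, Finset.mem_univ,
    true_and] at ha ⊢
  obtain ⟨i, hi, rfl⟩ := ha
  have hnot : w' i.succ ∉ lrMaxima w' := by
    rw [mem_lrMaxima_iff]
    push_neg
    refine ⟨w' i.castSucc, hi, ?_⟩
    rw [(perm_inv_apply_self' w'), (perm_inv_apply_self' w')]
    have : i.castSucc < i.succ := Fin.castSucc_lt_succ (i := i)
    exact this.le
  have hnotw : w' i.succ ∉ lrMaxima w := fun h => hnot (key h)
  rw [mem_lrMaxima_iff] at hnotw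
  push_neg at hnotw
  obtain ⟨b, hab, hba⟩ := hnotw
  set a := w' i.succ with ha_def
  have hne : w⁻¹ b ≠ w⁻¹ a := fun h => absurd (w⁻¹.injective h) hab.ne'
  have hlt : w⁻¹ b < w⁻¹ a := lt_of_le_of_ne hba hne
  -- position of a in w is nonzero
  have hi0 : w⁻¹ a ≠ 0 := fun h => by rw [h] at hlt; exact absurd hlt (Fin.not_lt_zero _)
  obtain ⟨k, hk⟩ : ∃ k : Fin m, k.succ = w⁻¹ a := by
    rcases Fin.eq_zero_or_eq_succ (w⁻¹ a) with h | ⟨k, hk⟩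
    · exact absurd h hi0
    · exact ⟨k, hk.symm⟩
  have hwa : w k.succ = a := by rw [hk, (perm_apply_inv_self' w)]
  refine ⟨k, ?_, hwa⟩
  rcases lt_trichotomy (w k.succ) (w k.castSucc) with h | h | h
  · exact h
  · exact absurd (w.injective h) (by simp [Fin.ext_iff])
  · -- 312 pattern in w: indices w⁻¹ b < k.castSucc < k.succ
    exfalso
    apply hw
    refine ⟨w⁻¹ b, k.castSucc, k.succ, ?_, Fin.castSucc_lt_succ (i := k), h, ?_⟩
    · have h1 : w⁻¹ b < k.succ := hk ▸ hlt
      have h2 : w⁻¹ b ≠ k.castSucc := by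
        intro he
        have : w (w⁻¹ b) = w k.castSucc := by rw [he]
        rw [(perm_apply_inv_self' w)] at this
        rw [← this] at h
        rw [hwa] at h
        exact absurd hab (not_lt.mpr h.le)
      have := Fin.lt_def.mp h1
      rw [Fin.lt_def]
      simp only [Fin.val_succ] at this
      have h3 : (w⁻¹ b).val ≠ (k.castSucc).val := fun he => h2 (Fin.ext he)
      simp only [Fin.coe_castSucc] at h3 ⊢
      omega
    · rw [hwa, (perm_apply_inv_self' w)]; exact hab
end
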